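/- Let I be a real interval containing 0, and let ξ, λ, D : I → ℝ be differentiable functions satisfying ξ'(t) = −D(t) ξ(t) and λ'(t) = D(t)(1 − λ(t)) for all t ∈ I. Then ξ(t) (λ(0) − 1) = ξ(0) (λ(t) − 1) for all t ∈ I; in particular, if λ(0) ≠ 1, then ξ(t) = C₃ (λ(t) − 1) with the constant C₃ = ξ(0)/(λ(0) − 1). -/

import Mathlib

open Set Topology

/-- A function satisfying `F' = -D F` on a convex set containing `0`, with `F 0 = 0`
and `D` continuous on `I`, vanishes identically on `I`. -/
lemma vanish_of_linear_ode (I : Set ℝ) (hI : Convex ℝ I) (h0 : (0 : ℝ) ∈ I)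
    (F D : ℝ → ℝ) (hDc : ContinuousOn D I)
    (hF : ∀ t ∈ I, HasDerivWithinAt F (-(D t) * F t) I t)
    (hF0 : F 0 = 0) : ∀ t ∈ I, F t = 0 := by
  intro t ht
  rcases le_total 0 t with h | h
  · have hsub : Icc (0:ℝ) t ⊆ I := hI.ordConnected.out h0 ht
    obtain ⟨K, hK⟩ := (isCompact_Icc (a := (0:ℝ)) (b := t)).exists_bound_of_continuousOn
      (hDc.mono hsub)
    set Kr : ℝ := max K 0 with hKr
    have hKr0 : 0 ≤ Kr := le_max_right _ _
    set Dc : ℝ → ℝ := fun s => max (-Kr) (min (D s) Kr) with hDcdef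
    have hDcK : ∀ s, |Dc s| ≤ Kr := by
      intro s
      rw [abs_le]
      constructor
      · exact le_max_left _ _
      · exact max_le (by linarith) (min_le_right _ _)
    have hDceq : ∀ s ∈ Icc (0:ℝ) t, Dc s = D s := by
      intro s hs
      have h1 : |D s| ≤ Kr := le_trans (hK s hs) (le_max_left _ _)
      rw [abs_le] at h1
      simp only [hDcdef]
      rw [min_eq_left h1.2, max_eq_right h1.1]
    have hv : ∀ s : ℝ, LipschitzOnWith ⟨Kr, hKr0⟩ (fun x => -(Dc s) * x) univ := by
      intro s
      apply LipschitzWith.lipschitzOnWith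
      apply LipschitzWith.of_dist_le_mul
      intro x y
      rw [Real.dist_eq, Real.dist_eq]
      have : -(Dc s) * x - -(Dc s) * y = -(Dc s) * (x - y) := by ring
      rw [this, abs_mul, abs_neg]
      exact mul_le_mul_of_nonneg_right (hDcK s) (abs_nonneg _)
    have key : EqOn F (fun _ => (0:ℝ)) (Icc 0 t) := by
      apply ODE_solution_unique_of_mem_Icc_right (fun s _ => hv s)
      · exact fun s hs => ((hF s (hsub hs)).continuousWithinAt).mono hsub
      · intro s hs
        rw [hDceq s (Ico_subset_Icc_self hs)]
        have hmem : I ∈ 𝓝[Ici s] s := by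
          rw [← nhdsWithin_Icc_eq_nhdsGE hs.2]
          exact Filter.mem_of_superset self_mem_nhdsWithin
            (hI.ordConnected.out (hsub (Ico_subset_Icc_self hs)) (hsub (right_mem_Icc.2 h)))
        exact (hF s (hsub (Ico_subset_Icc_self hs))).mono_of_mem_nhdsWithin hmem
      · exact fun s _ => mem_univ _
      · exact continuousOn_const
      · intro s hs
        simpa using (hasDerivWithinAt_const s (Ici s) (0:ℝ))
      · exact fun s _ => mem_univ _
      · simpa using hF0
    exact key (right_mem_Icc.2 h)
  · have hsub : Icc t (0:ℝ) ⊆ I := hI.ordConnected.out ht h0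
    obtain ⟨K, hK⟩ := (isCompact_Icc (a := t) (b := (0:ℝ))).exists_bound_of_continuousOn
      (hDc.mono hsub)
    set Kr : ℝ := max K 0 with hKr
    have hKr0 : 0 ≤ Kr := le_max_right _ _
    set Dc : ℝ → ℝ := fun s => max (-Kr) (min (D s) Kr) with hDcdef
    have hDcK : ∀ s, |Dc s| ≤ Kr := by
      intro s
      rw [abs_le]
      exact ⟨le_max_left _ _, max_le (by linarith) (min_le_right _ _)⟩
    have hDceq : ∀ s ∈ Icc t (0:ℝ), Dc s = D s := by
      intro s hs
      have h1 : |D s| ≤ Kr := le_trans (hK s hs) (le_max_left _ _)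
      rw [abs_le] at h1
      simp only [hDcdef]
      rw [min_eq_left h1.2, max_eq_right h1.1]
    have hv : ∀ s : ℝ, LipschitzOnWith ⟨Kr, hKr0⟩ (fun x => -(Dc s) * x) univ := by
      intro s
      apply LipschitzWith.lipschitzOnWith
      apply LipschitzWith.of_dist_le_mul
      intro x y
      rw [Real.dist_eq, Real.dist_eq]
      have : -(Dc s) * x - -(Dc s) * y = -(Dc s) * (x - y) := by ring
      rw [this, abs_mul, abs_neg]
      exact mul_le_mul_of_nonneg_right (hDcK s) (abs_nonneg _)
    have key : EqOn F (fun _ => (0:ℝ)) (Icc t 0) := by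
      apply ODE_solution_unique_of_mem_Icc_left (fun s _ => hv s)
      · exact fun s hs => ((hF s (hsub hs)).continuousWithinAt).mono hsub
      · intro s hs
        rw [hDceq s (Ioc_subset_Icc_self hs)]
        have hmem : I ∈ 𝓝[Iic s] s := by
          rw [← nhdsWithin_Icc_eq_nhdsLE hs.1]
          exact Filter.mem_of_superset self_mem_nhdsWithin
            (hI.ordConnected.out (hsub (left_mem_Icc.2 h)) (hsub (Ioc_subset_Icc_self hs)))
        exact (hF s (hsub (Ioc_subset_Icc_self hs))).mono_of_mem_nhdsWithin hmem
      · exact fun s _ => mem_univ _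
      · exact continuousOn_const
      · intro s hs
        simpa using (hasDerivWithinAt_const s (Iic s) (0:ℝ))
      · exact fun s _ => mem_univ _
      · simpa using hF0
    exact key (left_mem_Icc.2 h)



/-- For plane electrostatic oscillations, along characteristics the vorticity
`ξ` and the electric divergence `λ` satisfy `ξ' = −Dξ`, `λ' = D(1 − λ)`;
hence `ξ/(λ − 1)` is a first integral:
`ξ(t)(λ(0) − 1) = ξ(0)(λ(t) − 1)`, and in particular, if `λ(0) ≠ 1`,
`ξ(t) = C₃ (λ(t) − 1)` with `C₃ = ξ(0)/(λ(0) − 1)`. -/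
theorem vorticity_first_integral (I : Set ℝ) (hI : Convex ℝ I) (h0 : (0 : ℝ) ∈ I)
    (ξ lam D : ℝ → ℝ)
    (hD : ∀ t ∈ I, DifferentiableWithinAt ℝ D I t)
    (hξ : ∀ t ∈ I, HasDerivWithinAt ξ (-(D t) * ξ t) I t)
    (hlam : ∀ t ∈ I, HasDerivWithinAt lam (D t * (1 - lam t)) I t) :
    (∀ t ∈ I, ξ t * (lam 0 - 1) = ξ 0 * (lam t - 1)) ∧
    (lam 0 ≠ 1 → ∀ t ∈ I, ξ t = (ξ 0 / (lam 0 - 1)) * (lam t - 1)) := by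
  set F : ℝ → ℝ := fun t => ξ t * (lam 0 - 1) - ξ 0 * (lam t - 1) with hFdef
  have hDc : ContinuousOn D I := fun s hs => (hD s hs).continuousWithinAt
  have hF : ∀ t ∈ I, HasDerivWithinAt F (-(D t) * F t) I t := by
    intro t ht
    have h1 : HasDerivWithinAt (fun s => ξ s * (lam 0 - 1))
        (-(D t) * ξ t * (lam 0 - 1)) I t := (hξ t ht).mul_const _
    have h2 : HasDerivWithinAt (fun s => ξ 0 * (lam s - 1))
        (ξ 0 * (D t * (1 - lam t))) I t := ((hlam t ht).sub_const 1).const_mul _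
    have := h1.sub h2
    refine this.congr_deriv ?_
    simp only [hFdef]
    ring
  have hF0 : F 0 = 0 := by simp [hFdef]
  have hvanish := vanish_of_linear_ode I hI h0 F D hDc hF hF0
  have main : ∀ t ∈ I, ξ t * (lam 0 - 1) = ξ 0 * (lam t - 1) := by
    intro t ht
    have := hvanish t ht
    simp only [hFdef] at this
    linarith
  refine ⟨main, fun hne t ht => ?_⟩
  have h1 : lam 0 - 1 ≠ 0 := sub_ne_zero.2 hne
  field_simp
  linarith [main t ht]
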